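/- Sufficiency survives the frequency transformation (Proposition 2, discrete form): Let Y be a countable type and P a joint pmf on Y × ℕ^p such that the marginal P(x) = Σ_y P(y,x) is strictly positive for every x ∈ ℕ^p with m(x) := Σ_j x_j ≥ 1. Fix Φ ∈ ℝ^{p×K} and write f(x) = x/m(x) ∈ ℝ^p and P(y|x) = P(y,x)/P(x). Assume: (i) whenever m(x) = m(x′) and Φᵀx = Φᵀx′ (both with m ≥ 1), P(y|x) = P(y|x′) for all y; and (ii) whenever f(x) = f(x′) (both with m ≥ 1), P(y|x) = P(y|x′) for all y. Then whenever Φᵀf(x) = Φᵀf(x′) (both with m ≥ 1), P(y|x) = P(y|x′) for all y ∈ Y; that is, y is conditionally independent of x given z = Φᵀf(x). -/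

import Mathlib

open Real Finset

/-- Sufficiency survives the frequency transformation (Proposition 2, discrete form):
if `y ⊥ x | (Φᵀx, m)` and `y ⊥ x | f(x) = x/m(x)`, then `y ⊥ x | z = Φᵀf(x)`. -/
theorem sufficiency_survives_frequency_transformation
    (p K : ℕ) (Y : Type*) [Countable Y]
    (P : Y → (Fin p → ℕ) → ℝ)
    (hP0 : ∀ y x, 0 ≤ P y x)
    (hP1 : HasSum (fun yx : Y × (Fin p → ℕ) => P yx.1 yx.2) 1)
    (hPm : ∀ x : Fin p → ℕ, 1 ≤ ∑ j, x j → 0 < ∑' y : Y, P y x)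
    (Φ : Fin p → Fin K → ℝ)
    -- (i) conditional independence given (Φᵀx, m(x))
    (hi : ∀ x x' : Fin p → ℕ, 1 ≤ ∑ j, x j → 1 ≤ ∑ j, x' j →
      ∑ j, x j = ∑ j, x' j →
      (∀ k, ∑ j, Φ j k * (x j : ℝ) = ∑ j, Φ j k * (x' j : ℝ)) →
      ∀ y : Y, P y x / (∑' y' : Y, P y' x) = P y x' / (∑' y' : Y, P y' x'))
    -- (ii) conditional independence given the frequencies f(x) = x / m(x)
    (hii : ∀ x x' : Fin p → ℕ, 1 ≤ ∑ j, x j → 1 ≤ ∑ j, x' j →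
      (∀ j, (x j : ℝ) / ((∑ j', x j' : ℕ) : ℝ) = (x' j : ℝ) / ((∑ j', x' j' : ℕ) : ℝ)) →
      ∀ y : Y, P y x / (∑' y' : Y, P y' x) = P y x' / (∑' y' : Y, P y' x')) :
    -- conclusion: conditional independence given z = Φᵀ f(x)
    ∀ x x' : Fin p → ℕ, 1 ≤ ∑ j, x j → 1 ≤ ∑ j, x' j →
      (∀ k, ∑ j, Φ j k * ((x j : ℝ) / ((∑ j', x j' : ℕ) : ℝ))
          = ∑ j, Φ j k * ((x' j : ℝ) / ((∑ j', x' j' : ℕ) : ℝ))) →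
      ∀ y : Y, P y x / (∑' y' : Y, P y' x) = P y x' / (∑' y' : Y, P y' x') := by
  intro x x' hx hx' hΦ y
  set m := ∑ j, x j with hm
  set m' := ∑ j, x' j with hm'
  -- scaled vectors
  set x₁ : Fin p → ℕ := fun j => x j * m' with hx₁
  set x₂ : Fin p → ℕ := fun j => x' j * m with hx₂
  have hs₁ : ∑ j, x₁ j = m * m' := by
    simp [hx₁, ← Finset.sum_mul, hm]
  have hs₂ : ∑ j, x₂ j = m * m' := by
    simp [hx₂, ← Finset.sum_mul, hm']
    ring
  have hmm : 1 ≤ m * m' := Nat.one_le_iff_ne_zero.mpr (by positivity)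
  have hm0 : (0:ℝ) < (m:ℝ) := by exact_mod_cast hx
  have hm'0 : (0:ℝ) < (m':ℝ) := by exact_mod_cast hx'
  have hmm0 : (0:ℝ) < ((m*m' : ℕ):ℝ) := by exact_mod_cast hmm
  -- f(x₁) = f(x)
  have hf₁ : ∀ j, ((x₁ j : ℝ)) / ((∑ j', x₁ j' : ℕ) : ℝ) = (x j : ℝ) / (m : ℝ) := by
    intro j
    rw [hs₁]
    simp only [hx₁, hx₂]
    push_cast
    field_simp
  have hf₂ : ∀ j, ((x₂ j : ℝ)) / ((∑ j', x₂ j' : ℕ) : ℝ) = (x' j : ℝ) / (m' : ℝ) := by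
    intro j
    rw [hs₂]
    simp only [hx₁, hx₂]
    push_cast
    field_simp
  have h1 : P y x / (∑' y' : Y, P y' x) = P y x₁ / (∑' y' : Y, P y' x₁) := by
    refine hii x x₁ hx (hs₁ ▸ hmm) (fun j => ?_) y
    rw [hf₁ j]
  have h2 : P y x' / (∑' y' : Y, P y' x') = P y x₂ / (∑' y' : Y, P y' x₂) := by
    refine hii x' x₂ hx' (hs₂ ▸ hmm) (fun j => ?_) y
    rw [hf₂ j]
  have h3 : P y x₁ / (∑' y' : Y, P y' x₁) = P y x₂ / (∑' y' : Y, P y' x₂) := by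
    refine hi x₁ x₂ (hs₁ ▸ hmm) (hs₂ ▸ hmm) (hs₁.trans hs₂.symm) (fun k => ?_) y
    have := hΦ k
    have hx₁' : ∀ j, (x₁ j : ℝ) = (x j : ℝ) * (m' : ℝ) := fun j => by push_cast [hx₁]; ring
    have hx₂' : ∀ j, (x₂ j : ℝ) = (x' j : ℝ) * (m : ℝ) := fun j => by push_cast [hx₂]; ring
    simp only [hx₁', hx₂']
    have key : (∑ j, Φ j k * ((x j : ℝ) / (m : ℝ))) * ((m:ℝ) * (m':ℝ))
        = (∑ j, Φ j k * ((x' j : ℝ) / (m' : ℝ))) * ((m:ℝ) * (m':ℝ)) := by rw [this]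
    rw [Finset.sum_mul, Finset.sum_mul] at key
    calc ∑ j, Φ j k * ((x j : ℝ) * (m' : ℝ))
        = ∑ j, Φ j k * ((x j : ℝ) / (m : ℝ)) * ((m:ℝ) * (m':ℝ)) := by
          refine Finset.sum_congr rfl fun j _ => ?_; field_simp
      _ = ∑ j, Φ j k * ((x' j : ℝ) / (m' : ℝ)) * ((m:ℝ) * (m':ℝ)) := key
      _ = ∑ j, Φ j k * ((x' j : ℝ) * (m : ℝ)) := by
          refine Finset.sum_congr rfl fun j _ => ?_; field_simp
  rw [h1, h3, ← h2]
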